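/- Let X be an infinite-dimensional closed linear subspace of c₀, let Y be a strictly convex Banach space over the same scalar field, and let T : X → Y be a bounded linear monomorphism (there is C > 0 with ‖Tx‖ ≥ C‖x‖ for all x ∈ X). Then T does not belong to the closure, in the operator norm, of the set QNA(X,Y) of quasi norm attaining operators; in particular, QNA(X,Y) is not dense in L(X,Y). -/

import Mathlib

open BoundedContinuousFunction

set_option maxHeartbeats 1000000

/-- If `X` is an infinite-dimensional closed subspace of `c₀` (realized as a closed
submodule of `ℓ∞ = ℕ →ᵇ 𝕜` all of whose elements converge to `0`), `Y` is a strictly convex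
Banach space, and `T : X → Y` is a bounded linear monomorphism, then `T` is not in the
operator-norm closure of the set of quasi norm attaining operators; in particular that set is
not dense. -/
theorem monomorphism_from_subspace_c0_to_strictly_convex_not_in_closure_QNA
    {𝕜 Y : Type*} [RCLike 𝕜]
    [NormedAddCommGroup Y] [NormedSpace 𝕜 Y] [CompleteSpace Y]
    (hY : ∀ y₁ y₂ : Y, ‖y₁‖ ≤ 1 → ‖y₂‖ ≤ 1 → y₁ ≠ y₂ → ‖y₁ + y₂‖ < 2)
    (X : Submodule 𝕜 (ℕ →ᵇ 𝕜)) (hXclosed : IsClosed (X : Set (ℕ →ᵇ 𝕜)))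
    (hXc₀ : ∀ f ∈ X, Filter.Tendsto (⇑f) Filter.atTop (nhds (0 : 𝕜)))
    (hXinf : ¬ FiniteDimensional 𝕜 ↥X)
    (T : ↥X →L[𝕜] Y) (C : ℝ) (hC : 0 < C) (hmono : ∀ x : ↥X, C * ‖x‖ ≤ ‖T x‖) :
    T ∉ closure {S : ↥X →L[𝕜] Y | ∃ u ∈ closure (⇑S '' Metric.closedBall 0 1), ‖u‖ = ‖S‖} ∧
    ¬ Dense {S : ↥X →L[𝕜] Y | ∃ u ∈ closure (⇑S '' Metric.closedBall 0 1), ‖u‖ = ‖S‖} := by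
  haveI : CompleteSpace ↥X := hXclosed.completeSpace_coe
  -- tail-zero elements exist
  have tailzero : ∀ N : ℕ, ∃ y : ↥X, y ≠ 0 ∧ ∀ i < N, (y : ℕ →ᵇ 𝕜) i = 0 := by
    intro N
    let φ : ↥X →ₗ[𝕜] (Fin N → 𝕜) :=
      { toFun := fun x i => (x : ℕ →ᵇ 𝕜) i.1
        map_add' := by intros; funext i; simp
        map_smul' := by intros; funext i; simp }
    have hker : LinearMap.ker φ ≠ ⊥ := by
      intro h
      exact hXinf (FiniteDimensional.of_injective φ (LinearMap.ker_eq_bot.mp h))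
    obtain ⟨y, hy, hy0⟩ := Submodule.exists_mem_ne_zero_of_ne_bot hker
    refine ⟨y, hy0, fun i hi => ?_⟩
    have := congrFun (LinearMap.mem_ker.mp hy) ⟨i, hi⟩
    simpa [φ] using this
  -- key estimate
  have key : ∀ S : ↥X →L[𝕜] Y,
      (∃ u ∈ closure (⇑S '' Metric.closedBall 0 1), ‖u‖ = ‖S‖) → C / 2 ≤ ‖T - S‖ := by
    intro S hS
    by_contra hlt
    push_neg at hlt
    obtain ⟨u, hu, hnorm_u⟩ := hS
    -- S is a monomorphism with constant C/2
    have hSmono : ∀ x : ↥X, C / 2 * ‖x‖ ≤ ‖S x‖ := by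
      intro x
      have h1 := (T - S).le_opNorm x
      have h2 := hmono x
      have h3 : ‖T x‖ ≤ ‖(T - S) x‖ + ‖S x‖ := by
        have : T x = (T - S) x + S x := by simp
        rw [this]; exact norm_add_le _ _
      nlinarith [norm_nonneg x, norm_nonneg ((T - S) x)]
    have hC2 : (0:ℝ) < C / 2 := by positivity
    -- S attains its norm at some x₀
    obtain ⟨x₀, hx₀norm, hSx₀⟩ : ∃ x₀ : ↥X, ‖x₀‖ ≤ 1 ∧ S x₀ = u := by
      obtain ⟨v, hv, hvlim⟩ := mem_closure_iff_seq_limit.mp hu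
      choose x hx hSx using hv
      have hcauchyv : CauchySeq v := hvlim.cauchySeq
      have hcauchy : CauchySeq x := by
        rw [Metric.cauchySeq_iff]
        intro ε hε
        obtain ⟨M, hM⟩ := Metric.cauchySeq_iff.mp hcauchyv (C / 2 * ε) (by positivity)
        refine ⟨M, fun m hm n hn => ?_⟩
        have h1 := hSmono (x m - x n)
        have h2 : ‖S (x m - x n)‖ = dist (v m) (v n) := by
          rw [map_sub, dist_eq_norm, hSx m, hSx n]
        rw [dist_eq_norm]
        nlinarith [hM m hm n hn, norm_nonneg (x m - x n)]
      obtain ⟨x₀, hx₀⟩ := cauchySeq_tendsto_of_complete hcauchy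
      refine ⟨x₀, ?_, ?_⟩
      · have : x₀ ∈ Metric.closedBall (0 : ↥X) 1 :=
          Metric.isClosed_closedBall.mem_of_tendsto hx₀ (Filter.Eventually.of_forall hx)
        simpa using this
      · have h1 : Filter.Tendsto (fun n => S (x n)) Filter.atTop (nhds (S x₀)) :=
          (S.continuous.tendsto x₀).comp hx₀
        have h2 : Filter.Tendsto (fun n => S (x n)) Filter.atTop (nhds u) := by
          simpa [hSx] using hvlim
        exact tendsto_nhds_unique h1 h2
    -- ‖S‖ > 0
    obtain ⟨y₁, hy₁ne, _⟩ := tailzero 0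
    have hSpos : (0:ℝ) < ‖S‖ := by
      have h1 := hSmono y₁
      have h2 := S.le_opNorm y₁
      have h3 : (0:ℝ) < ‖y₁‖ := norm_pos_iff.mpr hy₁ne
      nlinarith
    -- tail of x₀ is small
    have htail := hXc₀ (x₀ : ℕ →ᵇ 𝕜) x₀.2
    obtain ⟨N, hN⟩ : ∃ N : ℕ, ∀ i ≥ N, ‖(x₀ : ℕ →ᵇ 𝕜) i‖ ≤ 1 / 2 := by
      obtain ⟨N, hN⟩ := (Metric.tendsto_atTop.mp htail) (1/2) (by norm_num)
      exact ⟨N, fun i hi => by have := hN i hi; rw [dist_zero_right] at this; linarith⟩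
    -- perturbation element
    obtain ⟨y, hyne, hyzero⟩ := tailzero N
    have hypos : (0:ℝ) < ‖y‖ := norm_pos_iff.mpr hyne
    set c : 𝕜 := (((2 * ‖y‖)⁻¹ : ℝ) : 𝕜) with hc_def
    have hcnorm : ‖c‖ = (2 * ‖y‖)⁻¹ := by
      rw [hc_def, RCLike.norm_ofReal, abs_of_pos (by positivity)]
    set y' : ↥X := c • y with hy'_def
    have hy'norm : ‖y'‖ = 1 / 2 := by
      have h : ‖y'‖ = ‖c • (y : ℕ →ᵇ 𝕜)‖ := rfl
      have h2 : ‖y‖ = ‖(y : ℕ →ᵇ 𝕜)‖ := rfl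
      rw [h, norm_smul, hcnorm, ← h2]
      rw [inv_mul_eq_div, div_eq_div_iff (by positivity) (by norm_num)]
      ring
    have hy'ne : y' ≠ 0 := by
      simp only [hy'_def, smul_ne_zero_iff]
      refine ⟨?_, hyne⟩
      rw [hc_def]
      simp only [ne_eq, RCLike.ofReal_eq_zero]
      positivity
    have hy'zero : ∀ i < N, (y' : ℕ →ᵇ 𝕜) i = 0 := by
      intro i hi
      have : (y' : ℕ →ᵇ 𝕜) = c • (y : ℕ →ᵇ 𝕜) := rfl
      rw [this]
      simp [hyzero i hi]
    -- ‖x₀ ± y'‖ ≤ 1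
    have hx₀pt : ∀ i, ‖(x₀ : ℕ →ᵇ 𝕜) i‖ ≤ 1 := fun i =>
      le_trans (norm_coe_le_norm _ i) hx₀norm
    have hy'pt : ∀ i, ‖(y' : ℕ →ᵇ 𝕜) i‖ ≤ 1 / 2 := fun i =>
      le_trans (norm_coe_le_norm _ i) (le_of_eq hy'norm)
    have hball : ∀ ε : 𝕜, ‖ε‖ = 1 → ‖x₀ + ε • y'‖ ≤ 1 := by
      intro ε hε
      have : ‖x₀ + ε • y'‖ = ‖((x₀ + ε • y' : ↥X) : ℕ →ᵇ 𝕜)‖ := rfl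
      rw [this]
      refine (norm_le zero_le_one).mpr fun i => ?_
      have hcoe : ((x₀ + ε • y' : ↥X) : ℕ →ᵇ 𝕜) i
          = (x₀ : ℕ →ᵇ 𝕜) i + ε * (y' : ℕ →ᵇ 𝕜) i := by
        push_cast
        simp
      rw [hcoe]
      rcases lt_or_ge i N with hi | hi
      · rw [hy'zero i hi]
        simpa using hx₀pt i
      · calc ‖(x₀ : ℕ →ᵇ 𝕜) i + ε * (y' : ℕ →ᵇ 𝕜) i‖
            ≤ ‖(x₀ : ℕ →ᵇ 𝕜) i‖ + ‖ε * (y' : ℕ →ᵇ 𝕜) i‖ := norm_add_le _ _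
          _ ≤ 1/2 + 1/2 := by
              gcongr
              · exact hN i hi
              · rw [norm_mul, hε, one_mul]; exact hy'pt i
          _ = 1 := by norm_num
    have hplus : ‖x₀ + y'‖ ≤ 1 := by simpa using hball 1 (by simp)
    have hminus : ‖x₀ - y'‖ ≤ 1 := by
      have := hball (-1) (by simp)
      simpa [sub_eq_add_neg] using this
    -- strict convexity argument
    set d : 𝕜 := ((‖S‖⁻¹ : ℝ) : 𝕜) with hd_def
    have hdnorm : ‖d‖ = ‖S‖⁻¹ := by
      rw [hd_def, RCLike.norm_ofReal, abs_of_pos (by positivity)]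
    have hb1 : ‖d • S (x₀ + y')‖ ≤ 1 := by
      rw [norm_smul, hdnorm]
      have := S.le_opNorm (x₀ + y')
      rw [inv_mul_le_iff₀ hSpos]
      nlinarith
    have hb2 : ‖d • S (x₀ - y')‖ ≤ 1 := by
      rw [norm_smul, hdnorm]
      have := S.le_opNorm (x₀ - y')
      rw [inv_mul_le_iff₀ hSpos]
      nlinarith
    have hsum : ‖d • S (x₀ + y') + d • S (x₀ - y')‖ = 2 := by
      have h1 : d • S (x₀ + y') + d • S (x₀ - y') = d • ((2:𝕜) • S x₀) := by
        rw [← smul_add, ← map_add]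
        congr 1
        rw [two_smul, ← map_add]
        congr 1
        abel
      rw [h1, norm_smul, norm_smul, hdnorm, RCLike.norm_two, hSx₀, hnorm_u]
      field_simp
    have heq : d • S (x₀ + y') = d • S (x₀ - y') := by
      by_contra hne
      have := hY _ _ hb1 hb2 hne
      rw [hsum] at this
      exact lt_irrefl 2 this
    have hdne : d ≠ 0 := by
      rw [hd_def]
      simp only [ne_eq, RCLike.ofReal_eq_zero]
      positivity
    have hSeq : S (x₀ + y') = S (x₀ - y') := smul_right_injective Y hdne heq
    have hSy' : S ((2:𝕜) • y') = 0 := by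
      have : (2:𝕜) • y' = (x₀ + y') - (x₀ - y') := by
        rw [two_smul]; abel
      rw [this, map_sub, hSeq, sub_self]
    have h2n : ‖(2:𝕜) • y'‖ = 1 := by
      have hh : ‖(2:𝕜) • y'‖ = ‖(2:𝕜) • (y' : ℕ →ᵇ 𝕜)‖ := rfl
      have hh2 : ‖(y' : ℕ →ᵇ 𝕜)‖ = ‖y'‖ := rfl
      rw [hh, norm_smul, RCLike.norm_two, hh2, hy'norm]
      norm_num
    have := hSmono ((2:𝕜) • y')
    rw [hSy', norm_zero, h2n] at this
    nlinarith
  have main : T ∉ closure {S : ↥X →L[𝕜] Y |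
      ∃ u ∈ closure (⇑S '' Metric.closedBall 0 1), ‖u‖ = ‖S‖} := by
    intro hmem
    have h2 : T ∈ @closure _ (@UniformSpace.toTopologicalSpace _
        (@PseudoMetricSpace.toUniformSpace _ ContinuousLinearMap.toPseudoMetricSpace))
        {S : ↥X →L[𝕜] Y | ∃ u ∈ closure (⇑S '' Metric.closedBall 0 1), ‖u‖ = ‖S‖} := hmem
    rw [Metric.mem_closure_iff] at h2
    obtain ⟨S, hS, hd⟩ := h2 (C / 2) (by positivity)
    have hd' : ‖T - S‖ < C / 2 := lt_of_eq_of_lt (dist_eq_norm T S).symm hd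
    have := key S hS
    linarith
  exact ⟨main, fun hdense => main (hdense.closure_eq ▸ Set.mem_univ T)⟩
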